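/- arXiv:2310.14089 — 2 statements merged into one kernel-verified Lean document; each statement's English description precedes it below -/
import Mathlib

section
/- For every real number A ≥ 0, the series ∑_{k=0}^∞ A^k k^{k/2}/k! converges and is bounded by C·exp(C·A²) for some absolute constant C > 0 (with the convention 0^0 = 1). -/
open Real

theorem aux_exp_tsum (x : ℝ) : (∑' n : ℕ, x ^ n / (Nat.factorial n : ℝ)) = Real.exp x := by
  rw [Real.exp_eq_exp_ℝ, NormedSpace.exp_eq_tsum_div]

theorem aux_kk (k : ℕ) : ((k : ℝ)) ^ (k : ℕ) ≤ Real.exp 1 ^ k * (Nat.factorial k : ℝ) := by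
  have h := Real.pow_div_factorial_le_exp (x := (k : ℝ)) (Nat.cast_nonneg k) k
  have hfac : (0 : ℝ) < (Nat.factorial k : ℝ) := by exact_mod_cast Nat.factorial_pos k
  have hexp : Real.exp (k : ℝ) = Real.exp 1 ^ k := by
    rw [← Real.exp_nat_mul, mul_one]
  rw [div_le_iff₀ hfac] at h
  rw [hexp] at h
  exact h

/-- For every real `A ≥ 0`, the series `∑ A^k k^(k/2)/k!` converges and is bounded by
`C·exp(C·A²)` for an absolute constant `C > 0` (with `0^0 = 1` via `rpow`). -/
theorem stmt0 :
    ∃ C : ℝ, 0 < C ∧ ∀ A : ℝ, 0 ≤ A →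
      Summable (fun k : ℕ => A ^ k * (k : ℝ) ^ ((k : ℝ) / 2) / (Nat.factorial k : ℝ)) ∧
      (∑' k : ℕ, A ^ k * (k : ℝ) ^ ((k : ℝ) / 2) / (Nat.factorial k : ℝ))
        ≤ C * Real.exp (C * A ^ 2) := by
  refine ⟨6, by norm_num, fun A hA => ?_⟩
  set f : ℕ → ℝ := fun k => A ^ k * (k : ℝ) ^ ((k : ℝ) / 2) / (Nat.factorial k : ℝ) with hf
  set x : ℝ := 2 * Real.exp 1 * A ^ 2 with hx
  have hx0 : 0 ≤ x := by positivity
  set g : ℕ → ℝ := fun k => (((2 : ℝ))⁻¹ ^ k + x ^ k / (Nat.factorial k : ℝ)) / 2 with hg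
  have hf0 : ∀ k, 0 ≤ f k := fun k => by
    have : 0 ≤ ((k : ℝ)) ^ ((k : ℝ) / 2) := Real.rpow_nonneg (Nat.cast_nonneg k) _
    positivity
  have hfg : ∀ k, f k ≤ g k := by
    intro k
    have hfac : (0 : ℝ) < (Nat.factorial k : ℝ) := by exact_mod_cast Nat.factorial_pos k
    have hrp : ((k : ℝ) ^ ((k : ℝ) / 2)) ^ 2 = (k : ℝ) ^ (k : ℕ) := by
      rw [← Real.rpow_natCast ((k : ℝ) ^ ((k : ℝ) / 2)) 2,
        ← Real.rpow_mul (Nat.cast_nonneg k)]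
      norm_num
    -- t² ≤ a * b
    have key : f k ^ 2 ≤ ((2 : ℝ))⁻¹ ^ k * (x ^ k / (Nat.factorial k : ℝ)) := by
      have h1 : f k ^ 2 = A ^ (2 * k) * (k : ℝ) ^ (k : ℕ) / (Nat.factorial k : ℝ) ^ 2 := by
        rw [hf]
        field_simp
        rw [hrp]
        ring
      have h2 : ((2 : ℝ))⁻¹ ^ k * (x ^ k / (Nat.factorial k : ℝ))
          = A ^ (2 * k) * (Real.exp 1 ^ k * (Nat.factorial k : ℝ)) / (Nat.factorial k : ℝ) ^ 2 := by
        rw [hx]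
        have hek : Real.exp (k : ℝ) = Real.exp 1 ^ k := by
          rw [← Real.exp_nat_mul, mul_one]
        field_simp
        rw [← mul_pow, show (1 / 2 : ℝ) * (2 * Real.exp 1 * A ^ 2) = Real.exp 1 * A ^ 2 by ring,
          mul_pow, pow_mul]
        ring
      rw [h1, h2]
      apply div_le_div_of_nonneg_right ?_ (by positivity)
      exact mul_le_mul_of_nonneg_left (aux_kk k) (by positivity)
    have ha : (0 : ℝ) ≤ ((2 : ℝ))⁻¹ ^ k := by positivity
    have hb : (0 : ℝ) ≤ x ^ k / (Nat.factorial k : ℝ) := by positivity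
    have ht := hf0 k
    rw [hg]
    nlinarith [sq_nonneg (((2 : ℝ))⁻¹ ^ k - x ^ k / (Nat.factorial k : ℝ)), sq_nonneg (f k)]
  have hgsum : Summable g := by
    apply Summable.div_const
    exact (summable_geometric_of_lt_one (by norm_num) (by norm_num)).add
      (Real.summable_pow_div_factorial x)
  have hfsum : Summable f := Summable.of_nonneg_of_le hf0 hfg hgsum
  refine ⟨hfsum, ?_⟩
  have h1 : (∑' k, f k) ≤ ∑' k, g k := Summable.tsum_le_tsum hfg hfsum hgsum
  have h2 : (∑' k, g k) = (2 + Real.exp x) / 2 := by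
    rw [hg]
    rw [tsum_div_const, Summable.tsum_add (summable_geometric_of_lt_one (by norm_num) (by norm_num))
      (Real.summable_pow_div_factorial x), tsum_geometric_of_lt_one (by norm_num) (by norm_num),
      aux_exp_tsum]
    norm_num
  have h3 : (2 + Real.exp x) / 2 ≤ 6 * Real.exp (6 * A ^ 2) := by
    have he : Real.exp x ≤ Real.exp (6 * A ^ 2) := by
      apply Real.exp_le_exp.2
      rw [hx]
      have : Real.exp 1 ≤ 3 := by
        have := Real.exp_one_lt_d9
        linarith
      nlinarith [sq_nonneg A]
    have h1e : (1 : ℝ) ≤ Real.exp (6 * A ^ 2) := Real.one_le_exp (by positivity)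
    linarith
  calc (∑' k, f k) ≤ ∑' k, g k := h1
    _ = (2 + Real.exp x) / 2 := h2
    _ ≤ 6 * Real.exp (6 * A ^ 2) := h3
end

section
/- Let u : ℝ^{n−1} × (0,∞) → ℝ be C¹ up to the boundary and bounded with bounded derivatives, and for ε > 0 define Eu(x', x_n) for x_n < 0 by Eu(x', x_n) = −ε·u(x', −(3/(2ε))x_n) + (1+ε)·u(x', −(1/(2(1+ε)))x_n), and Eu = u for x_n ≥ 0. Then Eu is continuous across x_n = 0, its distributional first derivatives agree with the classical ones on each half-space and have no singular part on {x_n = 0}, and ‖Eu‖_{L^∞(ℝⁿ)} ≤ (1 + 2ε)‖u‖_{L^∞}. -/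
/-- Modified first-order extension across the hyperplane `{x_n = 0}`: if `u` is `C¹` and
bounded by `Cb`, and `Eu` is defined by the two-point reflection formula
`Eu(x', x_n) = −ε·u(x', −(3/(2ε))x_n) + (1+ε)·u(x', −(1/(2(1+ε)))x_n)` for `x_n < 0` and
`Eu = u` for `x_n ≥ 0`, then `Eu` is continuous across the hyperplane, differentiable off it
(and the normal derivative matches across it, so the distributional derivative has no singular
part), and `‖Eu‖_∞ ≤ (1+2ε)·Cb`. -/
theorem stmt16 (n : ℕ) (ε Cb : ℝ) (hε : 0 < ε)
    (u : ((Fin n → ℝ) × ℝ) → ℝ) (hu : ContDiff ℝ 1 u) (hub : ∀ x, |u x| ≤ Cb)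
    (Eu : ((Fin n → ℝ) × ℝ) → ℝ)
    (hEu : ∀ x : (Fin n → ℝ) × ℝ, Eu x =
      if 0 ≤ x.2 then u x
      else -ε * u (x.1, -(3 / (2 * ε)) * x.2) + (1 + ε) * u (x.1, -(1 / (2 * (1 + ε))) * x.2)) :
    Continuous Eu ∧
    (∀ x : (Fin n → ℝ) × ℝ, x.2 ≠ 0 → DifferentiableAt ℝ Eu x) ∧
    (∀ x' : Fin n → ℝ,
      HasDerivAt (fun t : ℝ => Eu (x', t)) (deriv (fun t : ℝ => u (x', t)) 0) 0) ∧
    (∀ x : (Fin n → ℝ) × ℝ, |Eu x| ≤ (1 + 2 * ε) * Cb) := by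
  have hDu : Differentiable ℝ u := hu.differentiable one_ne_zero
  have hεne : ε ≠ 0 := ne_of_gt hε
  have h1εne : (1 : ℝ) + ε ≠ 0 := by positivity
  set a : ℝ := -(3 / (2 * ε)) with ha
  set b : ℝ := -(1 / (2 * (1 + ε))) with hb
  set v : ((Fin n → ℝ) × ℝ) → ℝ :=
    fun x => -ε * u (x.1, a * x.2) + (1 + ε) * u (x.1, b * x.2) with hv
  have hEu' : Eu = fun x => if (0:ℝ) ≤ x.2 then u x else v x := funext hEu
  have hmapd : ∀ c : ℝ, Differentiable ℝ (fun x : (Fin n → ℝ) × ℝ => (x.1, c * x.2)) := by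
    intro c
    exact differentiable_fst.prodMk (differentiable_snd.const_mul c)
  have hvd : Differentiable ℝ v := by
    exact ((hDu.comp (hmapd a)).const_mul _).add ((hDu.comp (hmapd b)).const_mul _)
  have heq0 : ∀ x : (Fin n → ℝ) × ℝ, x.2 = 0 → u x = v x := by
    rintro ⟨x1, x2⟩ hx
    simp only at hx
    subst hx
    simp only [hv, mul_zero]
    ring
  constructor
  · rw [hEu']
    exact Continuous.if_le hDu.continuous hvd.continuous continuous_const continuous_snd
      (fun x hx => heq0 x hx.symm)
  refine ⟨?_, ?_, ?_⟩
  · intro x hx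
    rcases lt_or_gt_of_ne hx with h | h
    · have : Eu =ᶠ[nhds x] v := by
        have hop : IsOpen {y : (Fin n → ℝ) × ℝ | y.2 < 0} :=
          isOpen_lt continuous_snd continuous_const
        filter_upwards [hop.mem_nhds h] with y hy
        rw [hEu y, if_neg (not_le.mpr hy)]
      exact (hvd x).congr_of_eventuallyEq this
    · have : Eu =ᶠ[nhds x] u := by
        have hop : IsOpen {y : (Fin n → ℝ) × ℝ | 0 < y.2} :=
          isOpen_lt continuous_const continuous_snd
        filter_upwards [hop.mem_nhds h] with y hy
        rw [hEu y, if_pos hy.le]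
      exact (hDu x).congr_of_eventuallyEq this
  · intro x'
    set φ : ℝ → ℝ := fun t => u (x', t) with hφdef
    have hφdiff : Differentiable ℝ φ :=
      hDu.comp ((differentiable_const x').prodMk differentiable_id)
    set D : ℝ → ℝ := fun t => deriv φ t with hD
    have hφ : HasDerivAt φ (deriv φ 0) 0 := (hφdiff 0).hasDerivAt
    have hcomp : ∀ c : ℝ, HasDerivAt (fun t : ℝ => φ (c * t)) (deriv φ 0 * c) 0 := by
      intro c
      have h1 : HasDerivAt (fun t : ℝ => c * t) (c * 1) 0 := (hasDerivAt_id 0).const_mul c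
      have h2 : HasDerivAt φ (deriv φ 0) (c * 0) := by rwa [mul_zero]
      have h3 := h2.comp 0 h1
      rw [mul_one] at h3
      exact h3
    have hhd : HasDerivAt
        (fun t : ℝ => -ε * φ (a * t) + (1 + ε) * φ (b * t)) (deriv φ 0) 0 := by
      have := ((hcomp a).const_mul (-ε)).add ((hcomp b).const_mul (1 + ε))
      refine HasDerivAt.congr_deriv this ?_
      rw [ha, hb]
      field_simp
      ring
    have hIci : HasDerivWithinAt (fun t : ℝ => Eu (x', t)) (deriv φ 0) (Set.Ici 0) 0 := by
      refine hφ.hasDerivWithinAt.congr (fun t ht => ?_) ?_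
      · rw [hEu (x', t), if_pos (Set.mem_Ici.mp ht)]
      · rw [hEu (x', 0), if_pos le_rfl]
    have hIic : HasDerivWithinAt (fun t : ℝ => Eu (x', t)) (deriv φ 0) (Set.Iic 0) 0 := by
      refine hhd.hasDerivWithinAt.congr (fun t ht => ?_) ?_
      · rcases eq_or_lt_of_le (Set.mem_Iic.mp ht) with h | h
        · rw [h, hEu (x', 0), if_pos le_rfl]
          have := heq0 ((x' , (0:ℝ))) rfl
          simpa [hv, mul_zero] using this
        · rw [hEu (x', t), if_neg (not_le.mpr h)]
      · rw [hEu (x', 0), if_pos le_rfl]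
        have := heq0 ((x' , (0:ℝ))) rfl
        simpa [hv, mul_zero] using this
    have := hIic.union hIci
    rw [Set.Iic_union_Ici, hasDerivWithinAt_univ] at this
    exact this
  · intro x
    have hCb : 0 ≤ Cb := le_trans (abs_nonneg _) (hub x)
    rw [hEu x]
    by_cases h : 0 ≤ x.2
    · rw [if_pos h]
      calc |u x| ≤ Cb := hub x
        _ ≤ (1 + 2 * ε) * Cb := by nlinarith
    · rw [if_neg h]
      calc |_| ≤ |(-ε) * u (x.1, -(3 / (2 * ε)) * x.2)| +
            |(1 + ε) * u (x.1, -(1 / (2 * (1 + ε))) * x.2)| := abs_add_le _ _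
        _ = ε * |u (x.1, -(3 / (2 * ε)) * x.2)| +
            (1 + ε) * |u (x.1, -(1 / (2 * (1 + ε))) * x.2)| := by
            rw [abs_mul, abs_mul, abs_neg, abs_of_pos hε, abs_of_pos (by positivity : (0:ℝ) < 1 + ε)]
        _ ≤ ε * Cb + (1 + ε) * Cb := by
            have h1 := hub (x.1, -(3 / (2 * ε)) * x.2)
            have h2 := hub (x.1, -(1 / (2 * (1 + ε))) * x.2)
            nlinarith
        _ = (1 + 2 * ε) * Cb := by ring
end
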